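/- arXiv:1710.08029 — 2 statements merged into one kernel-verified Lean document; each statement's English description precedes it below -/
import Mathlib

section
/- The Hadamard matrix satisfies the Pease factorization: H_n equals the n-fold product ∏_{k=1}^n ((I_{2^{n-1}} ⊗ DFT_2) · P(C_n)), where P(C_n) is the 2^n × 2^n permutation matrix of the perfect shuffle π(C_n). -/
open Matrix

/-- Binary representation of `i` as a vector in `F_2^n`, most significant bit first. -/
def bits (n : ℕ) (i : Fin (2 ^ n)) : Fin n → ZMod 2 :=
  fun k => if Nat.testBit i.val (n - 1 - k.val) then 1 else 0

/-- The vector `1_b = (0,...,0,1)ᵀ`. -/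
def oneb (n : ℕ) : Fin n → ZMod 2 := fun k => if k.val = n - 1 then 1 else 0

/-- Permutation matrix `P(Q)` of the linear permutation `π(Q)`:
entry `(j, i)` is `1` iff `j_b = Q i_b`. -/
def permMat (n : ℕ) (Q : Matrix (Fin n) (Fin n) (ZMod 2)) :
    Matrix (Fin (2 ^ n)) (Fin (2 ^ n)) ℤ :=
  Matrix.of fun j i => if bits n j = Q.mulVec (bits n i) then 1 else 0

/-- The array of butterflies `I_{2^{n-1}} ⊗ DFT_2`. -/
def butterflies (n : ℕ) : Matrix (Fin (2 ^ n)) (Fin (2 ^ n)) ℤ :=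
  Matrix.of fun j i =>
    if j.val / 2 = i.val / 2 then (if j.val % 2 = 1 ∧ i.val % 2 = 1 then -1 else 1) else 0

/-- `W(P) = P(P₀)·(I ⊗ DFT₂)·P(P₁) ⋯ (I ⊗ DFT₂)·P(Pₙ)`. -/
def W (n : ℕ) (P : ℕ → Matrix (Fin n) (Fin n) (ZMod 2)) :
    Matrix (Fin (2 ^ n)) (Fin (2 ^ n)) ℤ :=
  permMat n (P 0) * (List.ofFn fun k : Fin n => butterflies n * permMat n (P (k.val + 1))).prod

/-- `P_{i:j} = P_i P_{i+1} ⋯ P_j` (identity if `j < i`). -/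
def Pseg {n : ℕ} (P : ℕ → Matrix (Fin n) (Fin n) (ZMod 2)) (i j : ℕ) :
    Matrix (Fin n) (Fin n) (ZMod 2) :=
  ((List.range (j + 1 - i)).map fun k => P (i + k)).prod

/-- The spreading matrix `X = (P_{0:n-1}1_b | P_{0:n-2}1_b | ⋯ | P_0 1_b)`. -/
def spread (n : ℕ) (P : ℕ → Matrix (Fin n) (Fin n) (ZMod 2)) :
    Matrix (Fin n) (Fin n) (ZMod 2) :=
  Matrix.of fun r c => (Pseg P 0 (n - 1 - c.val)).mulVec (oneb n) r

/-- The matrix whose rows are `(P_{0:n-1}^{-T}1_b)ᵀ, ..., (P_0^{-T}1_b)ᵀ`. -/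
noncomputable def spreadInvRows (n : ℕ) (P : ℕ → Matrix (Fin n) (Fin n) (ZMod 2)) :
    Matrix (Fin n) (Fin n) (ZMod 2) :=
  Matrix.of fun r c => (Pseg P 0 (n - 1 - r.val))⁻¹.transpose.mulVec (oneb n) c

/-- The Hadamard matrix `H_n` with entries `(-1)^{⟨i_b, j_b⟩}`. -/
def hadamardH (n : ℕ) : Matrix (Fin (2 ^ n)) (Fin (2 ^ n)) ℤ :=
  Matrix.of fun i j => (-1) ^ (∑ k, bits n i k * bits n j k).val

/-- The cyclic bit-rotation matrix `C_n`: ones on the superdiagonal and in the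
bottom-left corner. -/
def Cmat (n : ℕ) : Matrix (Fin n) (Fin n) (ZMod 2) :=
  Matrix.of fun k l => if l.val = k.val + 1 ∨ (k.val = n - 1 ∧ l.val = 0) then 1 else 0

def bitn (x t : ℕ) : ℕ := if Nat.testBit x t then 1 else 0

def Mm (n : ℕ) : Matrix (Fin (2 ^ n)) (Fin (2 ^ n)) ℤ :=
  Matrix.of fun j c =>
    if c.val % 2 ^ (n - 1) = j.val / 2
    then (-1 : ℤ) ^ (bitn j.val 0 * bitn c.val (n - 1)) else 0

lemma testBit_eq_false_of_ge {n : ℕ} (i : Fin (2 ^ n)) {t : ℕ} (ht : n ≤ t) :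
    Nat.testBit i.val t = false := by
  apply Nat.testBit_eq_false_of_lt
  calc i.val < 2 ^ n := i.isLt
    _ ≤ 2 ^ t := Nat.pow_le_pow_right (by norm_num) ht

lemma bits_inj {n : ℕ} {i j : Fin (2 ^ n)} (h : bits n i = bits n j) : i = j := by
  ext1
  apply Nat.eq_of_testBit_eq
  intro t
  rcases lt_or_ge t n with ht | ht
  · have := congrFun h ⟨n - 1 - t, by omega⟩
    simp only [bits] at this
    have harg : n - 1 - (n - 1 - t) = t := by omega
    rw [harg] at this
    by_cases hb : Nat.testBit i.val t <;> by_cases hb' : Nat.testBit j.val t <;>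
      simp [hb, hb'] at this ⊢
  · rw [testBit_eq_false_of_ge i ht, testBit_eq_false_of_ge j ht]

lemma two_pow_split (n : ℕ) (hn : 1 ≤ n) : 2 ^ n = 2 * 2 ^ (n - 1) := by
  rw [← pow_succ']
  congr 1
  omega

lemma Cmat_mulVec (n : ℕ) (v : Fin n → ZMod 2) (k : Fin n) :
    (Cmat n).mulVec v k =
      if h : k.val < n - 1 then v ⟨k.val + 1, by omega⟩ else v ⟨0, by omega⟩ := by
  unfold Matrix.mulVec dotProduct Cmat
  by_cases h : k.val < n - 1
  · rw [dif_pos h, Finset.sum_eq_single (⟨k.val + 1, by omega⟩ : Fin n)]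
    · simp
    · intro l _ hl
      simp only [Matrix.of_apply]
      rw [if_neg, zero_mul]
      rintro (h1 | ⟨h2, h3⟩)
      · exact hl (Fin.ext h1)
      · omega
    · simp
  · rw [dif_neg h]
    have hk : k.val = n - 1 := by have := k.isLt; omega
    rw [Finset.sum_eq_single (⟨0, by omega⟩ : Fin n)]
    · simp [hk]
    · intro l _ hl
      simp only [Matrix.of_apply]
      rw [if_neg, zero_mul]
      rintro (h1 | ⟨h2, h3⟩)
      · have := l.isLt; omega
      · exact hl (Fin.ext h3)
    · simp

def rotl (n : ℕ) (hn : 1 ≤ n) (c : Fin (2 ^ n)) : Fin (2 ^ n) :=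
  ⟨2 * (c.val % 2 ^ (n - 1)) + c.val / 2 ^ (n - 1), by
    have h1 : c.val % 2 ^ (n - 1) < 2 ^ (n - 1) := Nat.mod_lt _ (Nat.pow_pos (by norm_num))
    have h2 : c.val < 2 * 2 ^ (n - 1) := by rw [← two_pow_split n hn]; exact c.isLt
    have h3 : c.val / 2 ^ (n - 1) < 2 :=
      Nat.div_lt_of_lt_mul (by rwa [mul_comm] at h2)
    have := two_pow_split n hn
    omega⟩

lemma rotl_div (n : ℕ) (hn : 1 ≤ n) (c : Fin (2 ^ n)) :
    (rotl n hn c).val / 2 = c.val % 2 ^ (n - 1) := by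
  have h2 : c.val < 2 * 2 ^ (n - 1) := by rw [← two_pow_split n hn]; exact c.isLt
  have h3 : c.val / 2 ^ (n - 1) < 2 := Nat.div_lt_of_lt_mul (by rwa [mul_comm] at h2)
  simp only [rotl]
  rw [Nat.mul_add_div (by norm_num), Nat.div_eq_of_lt h3, add_zero]

lemma rotl_mod (n : ℕ) (hn : 1 ≤ n) (c : Fin (2 ^ n)) :
    (rotl n hn c).val % 2 = c.val / 2 ^ (n - 1) := by
  have h2 : c.val < 2 * 2 ^ (n - 1) := by rw [← two_pow_split n hn]; exact c.isLt
  have h3 : c.val / 2 ^ (n - 1) < 2 := Nat.div_lt_of_lt_mul (by rwa [mul_comm] at h2)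
  simp only [rotl]
  rw [Nat.mul_add_mod, Nat.mod_eq_of_lt h3]

lemma testBit_top (n : ℕ) (hn : 1 ≤ n) (c : Fin (2 ^ n)) :
    Nat.testBit c.val (n - 1) = decide (c.val / 2 ^ (n - 1) = 1) := by
  have h2 : c.val < 2 * 2 ^ (n - 1) := by rw [← two_pow_split n hn]; exact c.isLt
  have h3 : c.val / 2 ^ (n - 1) < 2 := Nat.div_lt_of_lt_mul (by rwa [mul_comm] at h2)
  rw [Nat.testBit_eq_decide_div_mod_eq]
  congr 1
  rw [Nat.mod_eq_of_lt h3]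

lemma bits_rotl (n : ℕ) (hn : 1 ≤ n) (c : Fin (2 ^ n)) :
    bits n (rotl n hn c) = (Cmat n).mulVec (bits n c) := by
  funext k
  rw [Cmat_mulVec n]
  by_cases h : k.val < n - 1
  · rw [dif_pos h]
    show (if Nat.testBit (rotl n hn c).val (n - 1 - k.val) then (1 : ZMod 2) else 0)
        = (if Nat.testBit c.val (n - 1 - (k.val + 1)) then 1 else 0)
    have e1 : n - 1 - k.val = (n - 2 - k.val) + 1 := by omega
    have e2 : n - 1 - (k.val + 1) = n - 2 - k.val := by omega
    rw [e1, e2, Nat.testBit_succ, rotl_div n hn c, Nat.testBit_mod_two_pow]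
    simp [show n - 2 - k.val < n - 1 by omega]
  · rw [dif_neg h]
    have hk : k.val = n - 1 := by have := k.isLt; omega
    show (if Nat.testBit (rotl n hn c).val (n - 1 - k.val) then (1 : ZMod 2) else 0)
        = (if Nat.testBit c.val (n - 1 - 0) then 1 else 0)
    rw [hk, Nat.sub_self, Nat.sub_zero]
    have : Nat.testBit (rotl n hn c).val 0 = Nat.testBit c.val (n - 1) := by
      rw [Nat.testBit_zero, testBit_top n hn c, rotl_mod n hn c]
    rw [this]

lemma stage_eq (n : ℕ) (hn : 1 ≤ n) : butterflies n * permMat n (Cmat n) = Mm n := by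
  ext j c
  rw [Matrix.mul_apply, Finset.sum_eq_single (rotl n hn c)]
  · simp only [butterflies, permMat, Mm, Matrix.of_apply]
    rw [if_pos (bits_rotl n hn c), mul_one]
    have hdiv := rotl_div n hn c
    have hmod := rotl_mod n hn c
    rw [hdiv]
    by_cases hc : c.val % 2 ^ (n - 1) = j.val / 2
    · rw [if_pos hc.symm, if_pos hc]
      have hbt := testBit_top n hn c
      have h2 : c.val < 2 * 2 ^ (n - 1) := by rw [← two_pow_split n hn]; exact c.isLt
      have h3 : c.val / 2 ^ (n - 1) < 2 := Nat.div_lt_of_lt_mul (by rwa [mul_comm] at h2)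
      rw [hmod]
      simp only [bitn, Nat.testBit_zero, hbt]
      by_cases hj : j.val % 2 = 1 <;> by_cases hb : c.val / 2 ^ (n - 1) = 1 <;>
        simp [hj, hb]
    · rw [if_neg (fun hh => hc hh.symm), if_neg hc]
  · intro d _ hd
    simp only [permMat, Matrix.of_apply]
    rw [if_neg, mul_zero]
    intro hbits
    exact hd (bits_inj (hbits.trans (bits_rotl n hn c).symm))
  · simp

open Classical in
noncomputable def Emat (n m : ℕ) : Matrix (Fin (2 ^ n)) (Fin (2 ^ n)) ℤ :=
  Matrix.of fun j i =>
    if ∀ k, m ≤ k → k < n → Nat.testBit j.val k = Nat.testBit i.val (k - m)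
    then (-1 : ℤ) ^ (∑ t ∈ Finset.range m, bitn j.val t * bitn i.val (n - m + t))
    else 0

lemma neg_one_pow_mod_two (a : ℕ) : ((-1:ℤ)) ^ (a % 2) = (-1) ^ a := by
  rcases Nat.even_or_odd a with h | h
  · rw [Nat.even_iff.mp h, pow_zero, h.neg_one_pow]
  · rw [Nat.odd_iff.mp h, pow_one, h.neg_one_pow]

lemma Emat_zero (n : ℕ) : Emat n 0 = 1 := by
  ext j i
  simp only [Emat, Matrix.of_apply, Matrix.one_apply]
  by_cases h : j = i
  · subst h
    rw [if_pos (by intro k _ _; rfl), if_pos rfl]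
    simp
  · rw [if_neg, if_neg h]
    intro hc
    apply h
    ext1
    apply Nat.eq_of_testBit_eq
    intro t
    rcases lt_or_ge t n with ht | ht
    · simpa using hc t (Nat.zero_le t) ht
    · rw [testBit_eq_false_of_ge j ht, testBit_eq_false_of_ge i ht]

lemma Emat_top (n : ℕ) : Emat n n = hadamardH n := by
  ext j i
  simp only [Emat, hadamardH, Matrix.of_apply]
  rw [if_pos (by intro k hk hk'; omega)]
  have h1 : (∑ k : Fin n, bits n j k * bits n i k)
      = ((∑ t ∈ Finset.range n, bitn j.val t * bitn i.val t : ℕ) : ZMod 2) := by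
    push_cast
    rw [← Finset.sum_range_reflect (fun t => ((bitn j.val t : ZMod 2) * (bitn i.val t : ZMod 2))) n]
    rw [← Fin.sum_univ_eq_sum_range
      (fun t => ((bitn j.val (n-1-t) : ZMod 2) * (bitn i.val (n-1-t) : ZMod 2))) n]
    apply Finset.sum_congr rfl
    intro k _
    simp only [bits, bitn]
    by_cases hb : Nat.testBit i.val (n-1-k.val) <;> by_cases hb' : Nat.testBit j.val (n-1-k.val) <;>
      simp [hb, hb']
  rw [h1, ZMod.val_natCast, neg_one_pow_mod_two]
  congr 1
  exact Finset.sum_congr rfl fun t _ => by simp [Nat.sub_self]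

lemma step (n m : ℕ) (hm : m < n) : Mm n * Emat n m = Emat n (m + 1) := by
  ext j i
  have hsplit := two_pow_split n (by omega)
  have hj2 : j.val / 2 < 2 ^ (n - 1) := by
    have := j.isLt
    omega
  set ε : ℕ := bitn i.val (n - 1 - m) with hε
  have hε1 : ε ≤ 1 := by rw [hε, bitn]; split <;> omega
  have hεb : ε * 2 ^ (n - 1) ≤ 1 * 2 ^ (n - 1) := Nat.mul_le_mul_right _ hε1
  set c₀ : Fin (2 ^ n) := ⟨j.val / 2 + ε * 2 ^ (n - 1), by omega⟩ with hc₀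
  have hval : (j.val / 2 + ε * 2 ^ (n - 1)) = c₀.val := rfl
  have hc₀mod : c₀.val % 2 ^ (n - 1) = j.val / 2 := by
    rw [← hval, Nat.add_mul_mod_self_right, Nat.mod_eq_of_lt hj2]
  have hc₀div : c₀.val / 2 ^ (n - 1) = ε := by
    rw [← hval, Nat.add_mul_div_right _ _ (Nat.pow_pos (by norm_num)),
      Nat.div_eq_of_lt hj2, zero_add]
  have hc₀top : Nat.testBit c₀.val (n - 1) = Nat.testBit i.val (n - 1 - m) := by
    rw [testBit_top n (by omega) c₀, hc₀div, hε, bitn]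
    by_cases hb : Nat.testBit i.val (n - 1 - m) <;> simp [hb]
  have hc₀low : ∀ t, t < n - 1 → Nat.testBit c₀.val t = Nat.testBit j.val (t + 1) := by
    intro t ht
    have h1 : Nat.testBit c₀.val t = Nat.testBit (c₀.val % 2 ^ (n - 1)) t := by
      rw [Nat.testBit_mod_two_pow]
      simp [ht]
    rw [h1, hc₀mod, ← Nat.testBit_succ]
  rw [Matrix.mul_apply, Finset.sum_eq_single c₀]
  · simp only [Mm, Emat, Matrix.of_apply]
    rw [if_pos hc₀mod]
    have hcond : (∀ k, m ≤ k → k < n → Nat.testBit c₀.val k = Nat.testBit i.val (k - m)) ↔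
        (∀ k, m + 1 ≤ k → k < n → Nat.testBit j.val k = Nat.testBit i.val (k - (m + 1))) := by
      constructor
      · intro hC k hk1 hk2
        have h0 := hC (k - 1) (by omega) (by omega)
        rw [hc₀low (k - 1) (by omega)] at h0
        rw [show k - 1 + 1 = k by omega] at h0
        rw [h0]
        congr 1
        omega
      · intro hC k hk1 hk2
        rcases lt_or_ge k (n - 1) with hk | hk
        · rw [hc₀low k hk, hC (k + 1) (by omega) (by omega)]
          congr 1
          omega
        · have hk' : k = n - 1 := by omega
          rw [hk', hc₀top]
    by_cases hC : ∀ k, m + 1 ≤ k → k < n → Nat.testBit j.val k = Nat.testBit i.val (k - (m + 1))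
    · rw [if_pos (hcond.mpr hC), if_pos hC, ← pow_add]
      congr 1
      rw [Finset.sum_range_succ']
      have hsum : ∑ t ∈ Finset.range m, bitn c₀.val t * bitn i.val (n - m + t)
          = ∑ t ∈ Finset.range m, bitn j.val (t + 1) * bitn i.val (n - (m + 1) + (t + 1)) := by
        apply Finset.sum_congr rfl
        intro t ht
        simp only [Finset.mem_range] at ht
        rw [show n - (m + 1) + (t + 1) = n - m + t by omega]
        congr 1
        rw [bitn, bitn, hc₀low t (by omega)]
      have hf0 : bitn c₀.val (n - 1) = bitn i.val (n - (m + 1) + 0) := by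
        rw [bitn, bitn, hc₀top, show n - (m + 1) + 0 = n - 1 - m by omega]
      rw [hsum, hf0]
      omega
    · rw [if_neg (fun h => hC (hcond.mp h)), if_neg hC, mul_zero]
  · intro c _ hc
    simp only [Mm, Emat, Matrix.of_apply]
    by_cases h1 : c.val % 2 ^ (n - 1) = j.val / 2
    · by_cases h2 : ∀ k, m ≤ k → k < n → Nat.testBit c.val k = Nat.testBit i.val (k - m)
      · exfalso
        apply hc
        have hcd : c.val / 2 ^ (n - 1) < 2 :=
          Nat.div_lt_of_lt_mul (show c.val < 2 ^ (n - 1) * 2 by have := c.isLt; omega)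
        have hdm := Nat.div_add_mod c.val (2 ^ (n - 1))
        have htop := h2 (n - 1) (by omega) (by omega)
        rw [testBit_top n (by omega) c] at htop
        have hceq : c.val / 2 ^ (n - 1) = ε := by
          by_cases hb : Nat.testBit i.val (n - 1 - m)
          · rw [hb] at htop
            have h3 := of_decide_eq_true htop
            rw [hε, bitn, if_pos hb]
            exact h3
          · rw [Bool.not_eq_true] at hb
            rw [hb] at htop
            have h3 : c.val / 2 ^ (n - 1) ≠ 1 := by simpa using htop
            rw [hε, bitn, if_neg (by simp [hb])]
            have h4 : ∀ x : ℕ, x < 2 → x ≠ 1 → x = 0 := by intro x hx hx1; omega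
            exact h4 _ hcd h3
        have hcv : c.val = 2 ^ (n - 1) * ε + j.val / 2 := by
          rw [← hceq, ← h1]
          exact hdm.symm
        apply Fin.ext
        rw [hcv, ← hval]
        ring
      · rw [if_neg h2, mul_zero]
    · rw [if_neg h1, zero_mul]
  · simp

/-- Pease factorization: `H_n = ∏_{k=1}^n ((I_{2^{n-1}} ⊗ DFT_2) · P(C_n))`. -/
theorem pease_factorization (n : ℕ) :
    hadamardH n = (List.ofFn fun _ : Fin n => butterflies n * permMat n (Cmat n)).prod := by
  rw [List.ofFn_const, List.prod_replicate, ← Emat_top n]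
  have key : ∀ m, m ≤ n → Emat n m = (butterflies n * permMat n (Cmat n)) ^ m := by
    intro m
    induction m with
    | zero => intro _; rw [Emat_zero, pow_zero]
    | succ m ih =>
      intro hm
      rw [pow_succ', ← ih (by omega), stage_eq n (by omega), step n m (by omega)]
  exact key n le_rfl
end

section
/- Let P = (P_0, ..., P_n) be a sequence of n+1 matrices in GL_n(F_2) and let W(P) = P(P_0)·(I_{2^{n-1}} ⊗ DFT_2)·P(P_1)·...·(I_{2^{n-1}} ⊗ DFT_2)·P(P_n), where P(Q) denotes the permutation matrix of π(Q). Then every entry of column 0 of W(P) is nonzero if and only if the spreading matrix X = (P_{0:n-1}·1_b | P_{0:n-2}·1_b | ... | P_0·1_b) is invertible over F_2, where 1_b = (0,...,0,1)^T and P_{i:j} = P_i P_{i+1} ⋯ P_j. -/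
open Matrix

/-- The Hadamard matrix `H_n` with entries `(-1)^{⟨i_b, j_b⟩}`. -/
def hadamard (n : ℕ) : Matrix (Fin (2 ^ n)) (Fin (2 ^ n)) ℤ :=
  Matrix.of fun i j => (-1) ^ (∑ k, bits n i k * bits n j k).val

section Aux
variable {n : ℕ}

lemma zmod2_cases : ∀ x : ZMod 2, x = 0 ∨ x = 1 := by decide

lemma bits_injective (n : ℕ) : Function.Injective (bits n) := by
  intro i j h
  apply Fin.ext
  apply Nat.eq_of_testBit_eq
  intro b
  by_cases hb : b < n
  · have hk : n - 1 - (n - 1 - b) = b := by omega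
    have := congrFun h ⟨n - 1 - b, by omega⟩
    simp only [bits, hk] at this
    by_cases h1 : Nat.testBit i.val b <;> by_cases h2 : Nat.testBit j.val b <;>
      simp_all
  · have h1 : i.val < 2 ^ b := lt_of_lt_of_le i.isLt (Nat.pow_le_pow_right (by norm_num) (by omega))
    have h2 : j.val < 2 ^ b := lt_of_lt_of_le j.isLt (Nat.pow_le_pow_right (by norm_num) (by omega))
    rw [Nat.testBit_lt_two_pow h1, Nat.testBit_lt_two_pow h2]

lemma bits_bijective (n : ℕ) : Function.Bijective (bits n) := by
  rw [Fintype.bijective_iff_injective_and_card]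
  refine ⟨bits_injective n, by rw [Fintype.card_fun, ZMod.card, Fintype.card_fin, Fintype.card_fin]⟩

lemma bits_zero (n : ℕ) (h : 0 < 2 ^ n) : bits n ⟨0, h⟩ = 0 := by
  funext k; simp [bits, Nat.zero_testBit]

variable {n : ℕ}

lemma two_pow_even (hn : 0 < n) : 2 ^ n = 2 * 2 ^ (n - 1) := by
  conv_lhs => rw [show n = (n-1)+1 by omega]
  ring

def pt0 (hn : 0 < n) (j : Fin (2 ^ n)) : Fin (2 ^ n) :=
  ⟨2 * (j.val / 2), by have := j.isLt; omega⟩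

def pt1 (hn : 0 < n) (j : Fin (2 ^ n)) : Fin (2 ^ n) :=
  ⟨2 * (j.val / 2) + 1, by have := j.isLt; have := two_pow_even hn; omega⟩

lemma butterflies_mulVec (hn : 0 < n) (v : Fin (2 ^ n) → ℤ) (j : Fin (2 ^ n)) :
    (butterflies n).mulVec v j = v (pt0 hn j) + (-1) ^ (j.val % 2) * v (pt1 hn j) := by
  have hval0 : (pt0 hn j).val = 2 * (j.val / 2) := rfl
  have hval1 : (pt1 hn j).val = 2 * (j.val / 2) + 1 := rfl
  have hne : pt0 hn j ≠ pt1 hn j := by simp [pt0, pt1, Fin.ext_iff]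
  have key : ∀ i : Fin (2 ^ n), butterflies n j i * v i =
      (if i = pt0 hn j then v i else 0) +
      (if i = pt1 hn j then (-1) ^ (j.val % 2) * v i else 0) := by
    intro i
    rcases eq_or_ne i (pt0 hn j) with h0 | h0
    · subst h0
      rw [if_pos rfl, if_neg hne, add_zero]
      have : butterflies n j (pt0 hn j) = 1 := by
        simp only [butterflies, Matrix.of_apply, hval0]
        rw [if_pos (by omega), if_neg (by omega)]
      rw [this, one_mul]
    · rcases eq_or_ne i (pt1 hn j) with h1 | h1
      · subst h1
        rw [if_neg h0, if_pos rfl, zero_add]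
        have : butterflies n j (pt1 hn j) = (-1) ^ (j.val % 2) := by
          simp only [butterflies, Matrix.of_apply, hval1]
          rw [if_pos (by omega)]
          rcases Nat.mod_two_eq_zero_or_one j.val with h | h
          · rw [if_neg (by omega), h]; norm_num
          · rw [if_pos (by omega), h]; norm_num
        rw [this]
      · rw [if_neg h0, if_neg h1, add_zero]
        have : butterflies n j i = 0 := by
          simp only [butterflies, Matrix.of_apply]
          rw [if_neg]
          intro hc
          have e0 : i.val ≠ 2 * (j.val / 2) := fun hh => h0 (Fin.ext (hh.trans hval0.symm))
          have e1 : i.val ≠ 2 * (j.val / 2) + 1 := fun hh => h1 (Fin.ext (hh.trans hval1.symm))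
          omega
        rw [this, zero_mul]
  unfold Matrix.mulVec dotProduct
  rw [Finset.sum_congr rfl fun i _ => key i, Finset.sum_add_distrib,
    Finset.sum_ite_eq' _ (pt0 hn j), Finset.sum_ite_eq' _ (pt1 hn j)]
  simp

lemma bits_pt0 (hn : 0 < n) (j : Fin (2 ^ n)) (L : Fin n) (hL : L.val = n - 1) :
    bits n (pt0 hn j) = bits n j + (bits n j L) • oneb n := by
  funext k
  have hval0 : (pt0 hn j).val = 2 * (j.val / 2) := rfl
  rw [Pi.add_apply, Pi.smul_apply]
  by_cases hk : k.val = n - 1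
  · have hk' : k = L := Fin.ext (by omega)
    subst hk'
    have h1 : oneb n k = 1 := if_pos hk
    have h0 : bits n (pt0 hn j) k = 0 := by
      simp only [bits, hval0]
      rw [show n - 1 - k.val = 0 by omega, Nat.testBit_zero, if_neg (by simp only [decide_eq_true_eq]; omega)]
    rw [h0, h1, smul_eq_mul, mul_one]
    rcases zmod2_cases (bits n j k) with h | h <;> rw [h] <;> decide
  · have h1 : oneb n k = 0 := if_neg hk
    have h0 : bits n (pt0 hn j) k = bits n j k := by
      simp only [bits, hval0]
      rw [show n - 1 - k.val = (n - 2 - k.val) + 1 from by (have := k.isLt; omega),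
        Nat.testBit_succ, Nat.testBit_succ, Nat.mul_div_cancel_left _ (by norm_num)]
    rw [h0, h1, smul_eq_mul, mul_zero, add_zero]

lemma bits_pt1 (hn : 0 < n) (j : Fin (2 ^ n)) (L : Fin n) (hL : L.val = n - 1) :
    bits n (pt1 hn j) = bits n j + (bits n j L + 1) • oneb n := by
  funext k
  have hval1 : (pt1 hn j).val = 2 * (j.val / 2) + 1 := rfl
  rw [Pi.add_apply, Pi.smul_apply]
  by_cases hk : k.val = n - 1
  · have hk' : k = L := Fin.ext (by omega)
    subst hk'
    have h1 : oneb n k = 1 := if_pos hk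
    have h0 : bits n (pt1 hn j) k = 1 := by
      simp only [bits, hval1]
      rw [show n - 1 - k.val = 0 by omega, Nat.testBit_zero, if_pos (by simp only [decide_eq_true_eq]; omega)]
    rw [h0, h1, smul_eq_mul, mul_one]
    rcases zmod2_cases (bits n j k) with h | h <;> rw [h] <;> decide
  · have h1 : oneb n k = 0 := if_neg hk
    have h0 : bits n (pt1 hn j) k = bits n j k := by
      simp only [bits, hval1]
      rw [show n - 1 - k.val = (n - 2 - k.val) + 1 from by (have := k.isLt; omega),
        Nat.testBit_succ, Nat.testBit_succ, show (2 * (j.val / 2) + 1) / 2 = j.val / 2 by omega]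
    rw [h0, h1, smul_eq_mul, mul_zero, add_zero]

lemma permMat_mulVec {Q : Matrix (Fin n) (Fin n) (ZMod 2)} (hQ : IsUnit Q)
    (v : Fin (2 ^ n) → ℤ) (j i : Fin (2 ^ n)) (hi : bits n i = Q⁻¹.mulVec (bits n j)) :
    (permMat n Q).mulVec v j = v i := by
  have hdet := (Matrix.isUnit_iff_isUnit_det Q).mp hQ
  have key : ∀ i', permMat n Q j i' * v i' = if i' = i then v i' else 0 := by
    intro i'
    simp only [permMat, Matrix.of_apply]
    by_cases h : i' = i
    · subst h
      rw [if_pos, if_pos rfl, one_mul]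
      rw [hi, Matrix.mulVec_mulVec, Matrix.mul_nonsing_inv _ hdet, Matrix.one_mulVec]
    · rw [if_neg h, if_neg, zero_mul]
      intro hc
      apply h; apply bits_injective n
      rw [hi, hc, Matrix.mulVec_mulVec, Matrix.nonsing_inv_mul _ hdet, Matrix.one_mulVec]
  unfold Matrix.mulVec dotProduct
  rw [Finset.sum_congr rfl fun i' _ => key i', Finset.sum_ite_eq' _ i]
  simp

lemma zmod2_add_self : ∀ x : ZMod 2, x + x = 0 := by decide

lemma sum_zmod2 {M : Type*} [AddCommMonoid M] (f : ZMod 2 → M) : ∑ s : ZMod 2, f s = f 0 + f 1 := by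
  have : (Finset.univ : Finset (ZMod 2)) = {0, 1} := by decide
  rw [this]; simp

lemma Pseg_single (P : ℕ → Matrix (Fin n) (Fin n) (ZMod 2)) (a : ℕ) : Pseg P a a = P a := by
  simp [Pseg, List.range_succ]

lemma Pseg_cons (P : ℕ → Matrix (Fin n) (Fin n) (ZMod 2)) {i j : ℕ} (h : i ≤ j) :
    Pseg P i j = P i * Pseg P (i + 1) j := by
  unfold Pseg
  rw [show j + 1 - i = (j - i) + 1 by omega, show j + 1 - (i + 1) = j - i by omega,
    List.range_succ_eq_map, List.map_cons, List.prod_cons, List.map_map,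
    show ((fun k => P (i + k)) ∘ Nat.succ) = fun k => P ((i + 1) + k) from
      funext fun k => by
        simp only [Function.comp_apply, Nat.succ_eq_add_one]
        rw [show i + (k + 1) = i + 1 + k by omega],
    add_zero]

def colvec (n : ℕ) (P : ℕ → Matrix (Fin n) (Fin n) (ZMod 2)) (m : ℕ) (k : Fin m) : Fin n → ZMod 2 :=
  (Pseg P (n - m) (n - 1 - k.val)).mulVec (oneb n)

def phiv (n : ℕ) (P : ℕ → Matrix (Fin n) (Fin n) (ZMod 2)) (m : ℕ) (t : Fin m → ZMod 2) :
    Fin n → ZMod 2 := ∑ k, t k • colvec n P m k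

def Rmat (n : ℕ) (P : ℕ → Matrix (Fin n) (Fin n) (ZMod 2)) (m : ℕ) :
    Matrix (Fin (2 ^ n)) (Fin (2 ^ n)) ℤ :=
  permMat n (P (n - m)) *
    (List.ofFn fun k : Fin m => butterflies n * permMat n (P (n - m + k.val + 1))).prod

lemma Rmat_succ (P : ℕ → Matrix (Fin n) (Fin n) (ZMod 2)) {m : ℕ} (h : m + 1 ≤ n) :
    Rmat n P (m + 1) = permMat n (P (n - (m + 1))) * butterflies n * Rmat n P m := by
  unfold Rmat
  rw [List.ofFn_succ]
  have e1 : n - (m + 1) + (0 : Fin (m+1)).val + 1 = n - m := by rw [Fin.val_zero]; omega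
  have e2 : (List.ofFn fun k : Fin m => butterflies n * permMat n (P (n - (m+1) + (Fin.succ k).val + 1)))
      = List.ofFn fun k : Fin m => butterflies n * permMat n (P (n - m + k.val + 1)) := by
    congr 1
    funext k
    rw [show n - (m+1) + (Fin.succ k).val + 1 = n - m + k.val + 1 by rw [Fin.val_succ]; omega]
  rw [e2, List.prod_cons, e1]
  simp [Matrix.mul_assoc]

lemma phiv_succ (P : ℕ → Matrix (Fin n) (Fin n) (ZMod 2)) {m : ℕ} (h : m + 1 ≤ n)
    (t : Fin m → ZMod 2) (s : ZMod 2) :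
    phiv n P (m + 1) (Fin.snoc t s) = (P (n - (m + 1))).mulVec (phiv n P m t + s • oneb n) := by
  unfold phiv
  rw [Fin.sum_univ_castSucc]
  simp only [Fin.snoc_castSucc, Fin.snoc_last]
  rw [Matrix.mulVec_add, Matrix.mulVec_smul]
  congr 1
  · have hl : ∀ x : Fin n → ZMod 2, (P (n - (m+1))).mulVec x = Matrix.mulVecLin (P (n - (m+1))) x :=
      fun _ => rfl
    rw [hl, map_sum]
    refine Finset.sum_congr rfl fun k _ => ?_
    rw [_root_.map_smul]
    congr 1
    rw [← hl]
    show colvec n P (m+1) k.castSucc = (P (n - (m+1))).mulVec (colvec n P m k)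
    unfold colvec
    rw [Matrix.mulVec_mulVec]
    congr 1
    rw [Fin.coe_castSucc, Pseg_cons P (show n - (m+1) ≤ n - 1 - k.val by have := k.isLt; omega),
      show n - (m+1) + 1 = n - m by omega]
  · congr 1
    show colvec n P (m+1) (Fin.last m) = (P (n - (m+1))).mulVec (oneb n)
    unfold colvec
    rw [show (Fin.last m).val = m from rfl, show n - 1 - m = n - (m+1) by omega, Pseg_single]

def snocEquiv (m : ℕ) : ((Fin m → ZMod 2) × ZMod 2) ≃ (Fin (m + 1) → ZMod 2) where
  toFun p := Fin.snoc p.1 p.2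
  invFun t := (Fin.init t, t (Fin.last m))
  left_inv p := by simp
  right_inv t := by simp

def e0vec (n : ℕ) : Fin (2 ^ n) → ℤ := fun i => if i.val = 0 then 1 else 0

lemma key_induction (hn : 0 < n) (P : ℕ → Matrix (Fin n) (Fin n) (ZMod 2))
    (hP : ∀ k ≤ n, IsUnit (P k)) :
    ∀ m, m ≤ n → ∃ ε : (Fin m → ZMod 2) → ℤ,
      (∀ t, ε t = 1 ∨ ε t = -1) ∧
      ∀ j, (Rmat n P m).mulVec (e0vec n) j =
        ∑ t : Fin m → ZMod 2, if bits n j = phiv n P m t then ε t else 0 := by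
  intro m
  induction m with
  | zero =>
    intro _
    refine ⟨fun _ => 1, fun _ => Or.inl rfl, fun j => ?_⟩
    have hR : Rmat n P 0 = permMat n (P n) := by
      unfold Rmat; simp
    have hz : bits n (⟨0, by positivity⟩ : Fin (2 ^ n)) = 0 := bits_zero n _
    have key0 : ∀ i, permMat n (P n) j i * e0vec n i =
        if i = (⟨0, by positivity⟩ : Fin (2 ^ n)) then (if bits n j = 0 then (1:ℤ) else 0) else 0 := by
      intro i
      unfold e0vec
      by_cases h : i = (⟨0, by positivity⟩ : Fin (2 ^ n))
      · subst h
        rw [if_pos rfl, if_pos rfl, mul_one]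
        simp only [permMat, Matrix.of_apply, hz, Matrix.mulVec_zero]
      · rw [if_neg h, if_neg (fun hv => h (Fin.ext hv)), mul_zero]
    rw [hR]
    unfold Matrix.mulVec dotProduct
    rw [Finset.sum_congr rfl fun i _ => key0 i, Finset.sum_ite_eq' _ _]
    simp only [Finset.mem_univ, if_true]
    rw [Fintype.sum_unique]
    unfold phiv
    simp
  | succ m ih =>
    intro hm
    obtain ⟨ε, hε1, hε2⟩ := ih (by omega)
    have hL : (n:ℕ) - 1 < n := by omega
    set L : Fin n := ⟨n - 1, hL⟩ with hLdef
    refine ⟨fun t' => ε (Fin.init t') *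
      (if phiv n P m (Fin.init t') L = 1 ∧ t' (Fin.last m) = 0 then (-1:ℤ) else 1),
      fun t' => ?_, fun j => ?_⟩
    · rcases hε1 (Fin.init t') with h | h <;> simp only [h] <;> split_ifs <;> norm_num
    · show _ = ∑ t' : Fin (m+1) → ZMod 2, if bits n j = phiv n P (m+1) t' then
        ε (Fin.init t') *
          (if phiv n P m (Fin.init t') L = 1 ∧ t' (Fin.last m) = 0 then (-1:ℤ) else 1) else 0
      have hQ : IsUnit (P (n - (m+1))) := hP _ (by omega)
      have hdet := (Matrix.isUnit_iff_isUnit_det _).mp hQ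
      obtain ⟨i, hi⟩ := (bits_bijective n).2 ((P (n - (m+1)))⁻¹.mulVec (bits n j))
      have hji : bits n j = (P (n - (m+1))).mulVec (bits n i) := by
        rw [hi, Matrix.mulVec_mulVec, Matrix.mul_nonsing_inv _ hdet, Matrix.one_mulVec]
      have hcond : ∀ w, (bits n j = (P (n - (m+1))).mulVec w) ↔ bits n i = w := by
        intro w
        constructor
        · intro h
          have h2 := hji.symm.trans h
          have h3 := congrArg (fun u => (P (n - (m+1)))⁻¹.mulVec u) h2
          simpa [Matrix.mulVec_mulVec, Matrix.nonsing_inv_mul _ hdet, Matrix.one_mulVec] using h3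
        · intro h; rw [hji, h]
      have hRw : (Rmat n P (m+1)).mulVec (e0vec n) j
          = (butterflies n).mulVec ((Rmat n P m).mulVec (e0vec n)) i := by
        rw [Rmat_succ P hm, ← Matrix.mulVec_mulVec, ← Matrix.mulVec_mulVec]
        exact permMat_mulVec hQ _ j i hi
      -- sign facts
      have hbit : bits n i L = (if Nat.testBit i.val 0 then (1 : ZMod 2) else 0) := by
        show (if Nat.testBit i.val (n - 1 - L.val) then (1:ZMod 2) else 0) = _
        rw [show n - 1 - L.val = 0 by simp [hLdef]]
      have hc0 : bits n i L = 0 → (-1:ℤ)^(i.val % 2) = 1 := by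
        intro h
        rcases Nat.mod_two_eq_zero_or_one i.val with h2 | h2
        · rw [h2]; norm_num
        · exfalso
          rw [hbit, if_pos (by rw [Nat.testBit_zero]; simpa using h2)] at h
          exact one_ne_zero h
      have hc1 : bits n i L = 1 → (-1:ℤ)^(i.val % 2) = -1 := by
        intro h
        rcases Nat.mod_two_eq_zero_or_one i.val with h2 | h2
        · exfalso
          rw [hbit, if_neg (by rw [Nat.testBit_zero]; simp; omega)] at h
          exact zero_ne_one h
        · rw [h2]; norm_num
      have flip : ∀ (a : ZMod 2) (w : Fin n → ZMod 2),
          (bits n i + a • oneb n = w) ↔ (bits n i = w + a • oneb n) := by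
        intro a w
        constructor
        · intro h
          rw [← h, add_assoc, ← add_smul, zmod2_add_self, zero_smul, add_zero]
        · intro h
          rw [h, add_assoc, ← add_smul, zmod2_add_self, zero_smul, add_zero]
      rw [hRw, butterflies_mulVec hn, hε2 (pt0 hn i), hε2 (pt1 hn i), Finset.mul_sum,
        ← Finset.sum_add_distrib,
        ← Equiv.sum_comp (snocEquiv m), Fintype.sum_prod_type]
      rw [Finset.sum_congr rfl fun t (_ : t ∈ Finset.univ) => sum_zmod2 _]
      refine Finset.sum_congr rfl fun t _ => ?_
      simp only [snocEquiv, Equiv.coe_fn_mk, Fin.init_snoc, Fin.snoc_last,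
        phiv_succ P hm, hcond, bits_pt0 hn i L rfl, bits_pt1 hn i L rfl, flip,
        zero_smul, one_smul, add_zero]
      rcases zmod2_cases (bits n i L) with hb | hb
      · have hc := hc0 hb
        rw [hb, hc, zero_smul, add_zero, zero_add, one_smul, one_mul]
        by_cases hyp : bits n i = phiv n P m t
        · have hpl : phiv n P m t L = 0 := by rw [← hyp]; exact hb
          rw [if_pos hyp, if_pos hyp, hpl]
          simp [show ¬((0:ZMod 2) = 1) from by decide]
        · rw [if_neg hyp, if_neg hyp, zero_add, zero_add]
          simp [show ¬((1:ZMod 2) = 0) from by decide]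
      · have hc := hc1 hb
        rw [hb, hc, show (1:ZMod 2) + 1 = 0 by decide, zero_smul, add_zero, one_smul]
        by_cases hyp : bits n i = phiv n P m t
        · have hpl : phiv n P m t L = 1 := by rw [← hyp]; exact hb
          rw [if_pos hyp, if_pos hyp, hpl]
          simp [show ¬((1:ZMod 2) = 0) from by decide]
          try ring
        · rw [if_neg hyp, if_neg hyp, mul_zero, add_zero, zero_add]
          simp [show ¬((1:ZMod 2) = 0) from by decide]

lemma W_eq_Rmat (P : ℕ → Matrix (Fin n) (Fin n) (ZMod 2)) : W n P = Rmat n P n := by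
  unfold W Rmat
  rw [Nat.sub_self,
    show (fun k : Fin n => butterflies n * permMat n (P (0 + k.val + 1)))
      = fun k : Fin n => butterflies n * permMat n (P (k.val + 1)) from
        funext fun k => by rw [Nat.zero_add]]

lemma mulVec_e0 (M : Matrix (Fin (2 ^ n)) (Fin (2 ^ n)) ℤ) (j : Fin (2 ^ n)) :
    M.mulVec (e0vec n) j = M j ⟨0, by positivity⟩ := by
  unfold Matrix.mulVec dotProduct e0vec
  have h : ∀ i, M j i * (if i.val = 0 then (1:ℤ) else 0) =
      if i = (⟨0, by positivity⟩ : Fin (2 ^ n)) then M j i else 0 := by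
    intro i
    by_cases h : i = (⟨0, by positivity⟩ : Fin (2 ^ n))
    · subst h; rw [if_pos rfl, if_pos rfl, mul_one]
    · rw [if_neg (fun hv => h (Fin.ext hv)), if_neg h, mul_zero]
  rw [Finset.sum_congr rfl fun i _ => h i, Finset.sum_ite_eq' _ _]
  simp

lemma phiv_eq_spread (P : ℕ → Matrix (Fin n) (Fin n) (ZMod 2)) (t : Fin n → ZMod 2) :
    phiv n P n t = (spread n P).mulVec t := by
  funext r
  unfold phiv
  rw [Finset.sum_apply]
  have hr : ∀ k, (t k • colvec n P n k) r = spread n P r k * t k := by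
    intro k
    rw [Pi.smul_apply, smul_eq_mul, mul_comm]
    congr 1
    simp only [colvec, spread, Nat.sub_self, Matrix.of_apply]
  rw [Finset.sum_congr rfl fun k _ => hr k]
  rfl

end Aux

/-- Column `0` of `W(P)` has all entries nonzero iff the spreading matrix `X` is
invertible over `F_2`. -/
theorem column_zero_nonzero_iff_spread_invertible (n : ℕ)
    (P : ℕ → Matrix (Fin n) (Fin n) (ZMod 2)) (hP : ∀ k ≤ n, IsUnit (P k)) :
    (∀ j : Fin (2 ^ n), W n P j ⟨0, by positivity⟩ ≠ 0) ↔ IsUnit (spread n P) := by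

  rcases Nat.eq_zero_or_pos n with hn | hn
  · subst hn
    constructor
    · intro _
      rw [Matrix.isUnit_iff_isUnit_det, Matrix.det_fin_zero]
      exact isUnit_one
    · intro _ j
      have hW0 : W 0 P = permMat 0 (P 0) := by unfold W; simp
      have he : bits 0 j = (P 0).mulVec (bits 0 (⟨0, by positivity⟩ : Fin (2 ^ 0))) := by
        funext k; exact k.elim0
      rw [hW0]
      simp only [permMat, Matrix.of_apply, he, if_pos rfl]
      norm_num
  · obtain ⟨ε, hε1, hε2⟩ := key_induction hn P hP n le_rfl
    have hentry : ∀ j, W n P j ⟨0, by positivity⟩ =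
        ∑ t : Fin n → ZMod 2, if bits n j = (spread n P).mulVec t then ε t else 0 := by
      intro j
      rw [(mulVec_e0 (W n P) j).symm, W_eq_Rmat, hε2 j]
      refine Finset.sum_congr rfl fun t _ => ?_
      rw [phiv_eq_spread]
    constructor
    · intro hall
      by_contra hX
      have hdet : (spread n P).det = 0 := by
        by_contra hd
        exact hX ((Matrix.isUnit_iff_isUnit_det _).mpr (isUnit_iff_ne_zero.mpr hd))
      obtain ⟨v, hv0, hv⟩ := (Matrix.exists_mulVec_eq_zero_iff).mpr hdet
      have hninj : ¬ Function.Injective ((spread n P).mulVec) := by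
        intro hinj
        exact hv0 (hinj (by rw [hv, Matrix.mulVec_zero]))
      have hnsurj : ¬ Function.Surjective ((spread n P).mulVec) := by
        rwa [← Finite.injective_iff_surjective]
      rw [Function.Surjective] at hnsurj
      push_neg at hnsurj
      obtain ⟨y, hy⟩ := hnsurj
      obtain ⟨j, hj⟩ := (bits_bijective n).2 y
      apply hall j
      rw [hentry j]
      apply Finset.sum_eq_zero
      intro t _
      rw [if_neg]
      intro hc
      exact hy t (by rw [← hj, hc])
    · intro hX j
      rw [hentry j]
      have hdet := (Matrix.isUnit_iff_isUnit_det _).mp hX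
      have huniq : ∀ t : Fin n → ZMod 2,
          (bits n j = (spread n P).mulVec t) ↔ t = (spread n P)⁻¹.mulVec (bits n j) := by
        intro t
        constructor
        · intro h
          rw [h, Matrix.mulVec_mulVec, Matrix.nonsing_inv_mul _ hdet, Matrix.one_mulVec]
        · intro h
          rw [h, Matrix.mulVec_mulVec, Matrix.mul_nonsing_inv _ hdet, Matrix.one_mulVec]
      simp only [huniq]
      rw [Finset.sum_ite_eq' Finset.univ ((spread n P)⁻¹.mulVec (bits n j)) ε]
      simp only [Finset.mem_univ, if_true]
      rcases hε1 ((spread n P)⁻¹.mulVec (bits n j)) with h | h <;> rw [h] <;> norm_num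
end
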